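/- arXiv:2401.14593 — 5 statements merged into one kernel-verified Lean document; each statement's English description precedes it below -/
import Mathlib

section
/- With the group boundaries, truncation points, indices, and constants as in the context, let 0 = q_0 ≤ q_1 ≤ ... ≤ q_m be real numbers (the values of a distribution function at the boundaries), let f be the histogram density defined by f(x) = (q_j - q_{j-1})/(c_j - c_{j-1}) for c_{j-1} < x ≤ c_j (1 ≤ j ≤ m), and let L be the ogive, i.e., the piecewise linear interpolant with L(c_j) = q_j for 0 ≤ j ≤ m. If L(T) - L(t) ≠ 0, then the truncated first moment satisfies (∫_t^T x f(x) dx) / (L(T) - L(t)) = [u_l (q_l - q_{l-1}) + Σ_{i=l+1}^{r} v_i (q_i - q_{i-1}) + z_r (q_{r+1} - q_r)] / [A_2 q_r + B_2 q_{r+1} - A_1 q_{l-1} - B_1 q_l]. -/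
open MeasureTheory

lemma pieceInt (a b s : ℝ) (hab : a ≤ b) (f : ℝ → ℝ)
    (h : ∀ x ∈ Set.Ioc a b, f x = s) :
    IntervalIntegrable (fun x => x * f x) volume a b := by
  rw [intervalIntegrable_iff_integrableOn_Ioc_of_le hab]
  have hcont : IntegrableOn (fun x : ℝ => x * s) (Set.Ioc a b) volume :=
    (continuous_id.mul continuous_const).integrableOn_Ioc
  exact hcont.congr_fun (fun x hx => by rw [h x hx]) measurableSet_Ioc

lemma pieceVal (a b s : ℝ) (hab : a ≤ b) (f : ℝ → ℝ)
    (h : ∀ x ∈ Set.Ioc a b, f x = s) :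
    ∫ x in a..b, x * f x = s * (b ^ 2 - a ^ 2) / 2 := by
  have h1 : (∫ x in a..b, x * f x) = ∫ x in a..b, x * s := by
    apply intervalIntegral.integral_congr_ae
    filter_upwards with x hx
    rw [Set.uIoc_of_le hab] at hx
    rw [h x hx]
  rw [h1, intervalIntegral.integral_mul_const, integral_id]
  ring

/-- The sample truncated first moment of grouped data, computed from the histogram
density `f` and the ogive `L`, equals the explicit ratio
`[uₗ(qₗ - q_{l-1}) + Σ_{i=l+1}^r vᵢ(qᵢ - q_{i-1}) + z_r(q_{r+1} - q_r)] /
 [A₂ q_r + B₂ q_{r+1} - A₁ q_{l-1} - B₁ qₗ]`. -/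
theorem stmt2 (m : ℕ) (c : ℕ → ℝ) (hc0 : c 0 = 0)
    (hcmono : ∀ j, j < m → c j < c (j + 1))
    (q : ℕ → ℝ) (hq0 : q 0 = 0) (hqmono : ∀ j, j < m → q j ≤ q (j + 1))
    (l r : ℕ) (hl : 1 ≤ l) (hlr : l ≤ r) (hrm : r + 1 ≤ m)
    (t T : ℝ) (ht1 : c (l - 1) < t) (ht2 : t ≤ c l) (hT1 : c r < T) (hT2 : T ≤ c (r + 1))
    (A₁ B₁ A₂ B₂ uₗ z_r : ℝ) (v : ℕ → ℝ)
    (hA₁ : A₁ = (c l - t) / (c l - c (l - 1)))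
    (hB₁ : B₁ = (t - c (l - 1)) / (c l - c (l - 1)))
    (hA₂ : A₂ = (c (r + 1) - T) / (c (r + 1) - c r))
    (hB₂ : B₂ = (T - c r) / (c (r + 1) - c r))
    (huₗ : uₗ = (c l ^ 2 - t ^ 2) / (2 * (c l - c (l - 1))))
    (hv : ∀ i, v i = (c i + c (i - 1)) / 2)
    (hz : z_r = (T ^ 2 - c r ^ 2) / (2 * (c (r + 1) - c r)))
    -- the histogram density
    (f : ℝ → ℝ)
    (hf : ∀ j, 1 ≤ j → j ≤ m → ∀ x, c (j - 1) < x → x ≤ c j →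
      f x = (q j - q (j - 1)) / (c j - c (j - 1)))
    -- the ogive: linear interpolant of the points (c j, q j)
    (L : ℝ → ℝ)
    (hL : ∀ j, 1 ≤ j → j ≤ m → ∀ x, c (j - 1) ≤ x → x ≤ c j →
      L x = ((c j - x) * q (j - 1) + (x - c (j - 1)) * q j) / (c j - c (j - 1)))
    (hLtT : L T - L t ≠ 0) :
    (∫ x in t..T, x * f x) / (L T - L t)
      = (uₗ * (q l - q (l - 1)) + (∑ i ∈ Finset.Icc (l + 1) r, v i * (q i - q (i - 1)))
          + z_r * (q (r + 1) - q r))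
        / (A₂ * q r + B₂ * q (r + 1) - A₁ * q (l - 1) - B₁ * q l) := by
  have hlm : l ≤ m := by omega
  have hl1 : l - 1 + 1 = l := Nat.succ_pred_eq_of_pos hl
  have hcl : c (l - 1) < c l := by
    have := hcmono (l - 1) (by omega)
    rwa [hl1] at this
  have hcr : c r < c (r + 1) := hcmono r (by omega)
  have hd1 : c l - c (l - 1) ≠ 0 := sub_ne_zero.mpr (ne_of_gt hcl)
  have hd2 : c (r + 1) - c r ≠ 0 := sub_ne_zero.mpr (ne_of_gt hcr)
  -- segment 1
  have hseg1 : ∀ x ∈ Set.Ioc t (c l), f x = (q l - q (l - 1)) / (c l - c (l - 1)) := by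
    intro x hx
    exact hf l hl hlm x (lt_trans ht1 hx.1) hx.2
  have hseg3 : ∀ x ∈ Set.Ioc (c r) T, f x = (q (r + 1) - q r) / (c (r + 1) - c r) := by
    intro x hx
    have := hf (r + 1) (by omega) hrm x (by simpa using hx.1) (le_trans hx.2 hT2)
    simpa using this
  -- middle part by induction
  have middle : ∀ k, l ≤ k → k ≤ m →
      IntervalIntegrable (fun x => x * f x) volume (c l) (c k) ∧
      (∫ x in (c l)..(c k), x * f x)
        = ∑ i ∈ Finset.Icc (l + 1) k,
            (q i - q (i - 1)) / (c i - c (i - 1)) * (c i ^ 2 - c (i - 1) ^ 2) / 2 := by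
    intro k hlk
    induction k, hlk using Nat.le_induction with
    | base =>
      intro _
      refine ⟨IntervalIntegrable.refl, ?_⟩
      rw [intervalIntegral.integral_same, Finset.Icc_eq_empty (by omega), Finset.sum_empty]
    | succ k hlk ih =>
      intro hkm
      have ihh := ih (by omega)
      have hpiece : ∀ x ∈ Set.Ioc (c k) (c (k + 1)),
          f x = (q (k + 1) - q k) / (c (k + 1) - c k) := by
        intro x hx
        have := hf (k + 1) (by omega) hkm x (by simpa using hx.1) hx.2
        simpa using this
      have hk1 : c k ≤ c (k + 1) := le_of_lt (hcmono k (by omega))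
      have hint2 := pieceInt _ _ _ hk1 f hpiece
      have hval2 := pieceVal _ _ _ hk1 f hpiece
      refine ⟨ihh.1.trans hint2, ?_⟩
      rw [← intervalIntegral.integral_add_adjacent_intervals ihh.1 hint2, ihh.2, hval2,
        Finset.sum_Icc_succ_top (by omega : l + 1 ≤ k + 1)]
      simp [Nat.add_sub_cancel]
  obtain ⟨hmidInt, hmidVal⟩ := middle r hlr (by omega)
  have hseg1Int := pieceInt t (c l) _ ht2 f hseg1
  have hseg1Val := pieceVal t (c l) _ ht2 f hseg1
  have hseg3Int := pieceInt (c r) T _ (le_of_lt hT1) f hseg3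
  have hseg3Val := pieceVal (c r) T _ (le_of_lt hT1) f hseg3
  have e2 : (∫ x in (c l)..T, x * f x)
      = (∫ x in (c l)..(c r), x * f x) + ∫ x in (c r)..T, x * f x :=
    (intervalIntegral.integral_add_adjacent_intervals hmidInt hseg3Int).symm
  have e1 : (∫ x in t..T, x * f x)
      = (∫ x in t..(c l), x * f x) + ∫ x in (c l)..T, x * f x :=
    (intervalIntegral.integral_add_adjacent_intervals hseg1Int (hmidInt.trans hseg3Int)).symm
  -- numerator
  have hNum : (∫ x in t..T, x * f x)
      = uₗ * (q l - q (l - 1)) + (∑ i ∈ Finset.Icc (l + 1) r, v i * (q i - q (i - 1)))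
          + z_r * (q (r + 1) - q r) := by
    rw [e1, e2, hseg1Val, hmidVal, hseg3Val]
    have hsum : ∑ i ∈ Finset.Icc (l + 1) r,
        (q i - q (i - 1)) / (c i - c (i - 1)) * (c i ^ 2 - c (i - 1) ^ 2) / 2
        = ∑ i ∈ Finset.Icc (l + 1) r, v i * (q i - q (i - 1)) := by
      apply Finset.sum_congr rfl
      intro i hi
      obtain ⟨hi1, hi2⟩ := Finset.mem_Icc.mp hi
      have hci : c (i - 1) < c i := by
        have hm : i - 1 < m := by omega
        have := hcmono (i - 1) hm
        have hi' : i - 1 + 1 = i := by omega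
        rwa [hi'] at this
      have hdi : c i - c (i - 1) ≠ 0 := sub_ne_zero.mpr (ne_of_gt hci)
      rw [hv i]
      field_simp
      ring
    rw [hsum, huₗ, hz]
    field_simp
    ring
  -- denominator
  have hLT : L T = A₂ * q r + B₂ * q (r + 1) := by
    have := hL (r + 1) (by omega) hrm T (by simpa using le_of_lt hT1) hT2
    simp only [Nat.add_sub_cancel] at this
    rw [this, hA₂, hB₂]
    field_simp
  have hLt : L t = A₁ * q (l - 1) + B₁ * q l := by
    have := hL l hl hlm t (le_of_lt ht1) ht2
    rw [this, hA₁, hB₁]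
    field_simp
  rw [hNum, hLT, hLt]
  congr 1
  ring
end

section
/- With the group boundaries, truncation points, indices, constants, exponential cdf, and function g_tT as in the context, and assuming additionally t < c_l (so that A_1 > 0), the limit of g_tT(θ) as θ → 0+ (θ tending to 0 through positive values) equals u_l / A_1. -/
open MeasureTheory Filter

/-- Limiting value of `g_{tT}(θ)` as `θ → 0⁺`: it tends to `uₗ / A₁`. -/
theorem stmt4
    (m : ℕ) (c : ℕ → ℝ) (hc0 : c 0 = 0)
    (hcmono : ∀ j, j < m → c j < c (j + 1))
    (l r : ℕ) (hl : 1 ≤ l) (hlr : l ≤ r) (hrm : r + 1 ≤ m)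
    (t T : ℝ) (ht1 : c (l - 1) < t) (ht2 : t ≤ c l) (hT1 : c r < T) (hT2 : T ≤ c (r + 1))
    (A₁ B₁ A₂ B₂ uₗ z_r : ℝ) (v : ℕ → ℝ)
    (hA₁ : A₁ = (c l - t) / (c l - c (l - 1)))
    (hB₁ : B₁ = (t - c (l - 1)) / (c l - c (l - 1)))
    (hA₂ : A₂ = (c (r + 1) - T) / (c (r + 1) - c r))
    (hB₂ : B₂ = (T - c r) / (c (r + 1) - c r))
    (huₗ : uₗ = (c l ^ 2 - t ^ 2) / (2 * (c l - c (l - 1))))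
    (hv : ∀ i, v i = (c i + c (i - 1)) / 2)
    (hz : z_r = (T ^ 2 - c r ^ 2) / (2 * (c (r + 1) - c r)))
    -- the exponential cdf at the group boundaries and the group probabilities
    (p : ℕ → ℝ → ℝ) (hp : ∀ j θ, p j θ = 1 - Real.exp (-(c j) / θ))
    (Pr : ℕ → ℝ → ℝ) (hPr : ∀ j θ, Pr j θ = p j θ - p (j - 1) θ)
    (Nstar Hstar g : ℝ → ℝ)
    (hN : ∀ θ, Nstar θ = uₗ * Pr l θ + (∑ i ∈ Finset.Icc (l + 1) r, v i * Pr i θ)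
      + z_r * Pr (r + 1) θ)
    (hH : ∀ θ, Hstar θ = A₂ * p r θ + B₂ * p (r + 1) θ - A₁ * p (l - 1) θ - B₁ * p l θ)
    (hg : ∀ θ, g θ = Nstar θ / Hstar θ)
    (htl : t < c l) :
    Tendsto g (nhdsWithin 0 (Set.Ioi 0)) (nhds (uₗ / A₁)) := by
  -- strict monotonicity up to m
  have mono : ∀ j k, j < k → k ≤ m → c j < c k := by
    intro j k hjk hkm
    induction k with
    | zero => omega
    | succ n ih =>
      rcases Nat.lt_or_ge j n with h' | h'
      · exact (ih h' (by omega)).trans (hcmono n (by omega))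
      · have hjn : j = n := by omega
        subst hjn
        exact hcmono j (by omega)
  have hd1 : 0 < c l - c (l - 1) := sub_pos.mpr (mono (l - 1) l (by omega) (by omega))
  have hd2 : 0 < c (r + 1) - c r := sub_pos.mpr (mono r (r + 1) (by omega) hrm)
  have hA1pos : 0 < A₁ := by
    rw [hA₁]; exact div_pos (sub_pos.mpr htl) hd1
  have hAB1 : A₁ + B₁ = 1 := by
    rw [hA₁, hB₁, ← add_div, div_eq_one_iff_eq hd1.ne']; ring
  have hAB2 : A₂ + B₂ = 1 := by
    rw [hA₂, hB₂, ← add_div, div_eq_one_iff_eq hd2.ne']; ring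
  -- the basic exponential limit
  have key : ∀ a : ℝ, 0 < a →
      Tendsto (fun θ : ℝ => Real.exp (-a / θ)) (nhdsWithin 0 (Set.Ioi 0)) (nhds 0) := by
    intro a ha
    have h1 : Tendsto (fun θ : ℝ => a / θ) (nhdsWithin 0 (Set.Ioi 0)) atTop := by
      have h0 := tendsto_inv_nhdsGT_zero.const_mul_atTop ha
      simpa [div_eq_mul_inv] using h0
    have h2 : Tendsto (fun θ : ℝ => -a / θ) (nhdsWithin 0 (Set.Ioi 0)) atBot := by
      have h3 := tendsto_neg_atTop_atBot.comp h1
      have h4 : (fun θ : ℝ => -a / θ) = (Neg.neg ∘ fun θ : ℝ => a / θ) := by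
        funext θ; simp [neg_div]
      rw [h4]; exact h3
    exact Real.tendsto_exp_atBot.comp h2
  set E : ℝ → ℝ := fun θ => Real.exp (-(c (l - 1)) / θ) with hEdef
  set q : ℕ → ℝ → ℝ := fun j θ => Real.exp (-(c j) / θ) / E θ with hqdef
  have hEne : ∀ θ, E θ ≠ 0 := fun θ => (Real.exp_pos _).ne'
  have hqlim : ∀ j, c (l - 1) < c j →
      Tendsto (q j) (nhdsWithin 0 (Set.Ioi 0)) (nhds 0) := by
    intro j hj
    have hfun : q j = fun θ : ℝ => Real.exp (-(c j - c (l - 1)) / θ) := by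
      funext θ
      rw [hqdef]
      simp only [hEdef]
      rw [show -(c j - c (l - 1)) / θ = -(c j) / θ - -(c (l - 1)) / θ by ring, Real.exp_sub]
    rw [hfun]
    exact key _ (by linarith)
  -- the H part
  have hHE : ∀ θ, Hstar θ / E θ = A₁ + B₁ * q l θ - A₂ * q r θ - B₂ * q (r + 1) θ := by
    intro θ
    have hform : Hstar θ = A₁ * E θ + B₁ * Real.exp (-(c l) / θ)
        - A₂ * Real.exp (-(c r) / θ) - B₂ * Real.exp (-(c (r + 1)) / θ) := by
      rw [hH, hp, hp, hp, hp, hEdef]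
      linear_combination hAB2 - hAB1
    rw [hform, hqdef]
    field_simp [hEne θ]
  have hHlim : Tendsto (fun θ => Hstar θ / E θ) (nhdsWithin 0 (Set.Ioi 0)) (nhds A₁) := by
    have h1 : Tendsto (fun θ => A₁ + B₁ * q l θ - A₂ * q r θ - B₂ * q (r + 1) θ)
        (nhdsWithin 0 (Set.Ioi 0)) (nhds (A₁ + B₁ * 0 - A₂ * 0 - B₂ * 0)) := by
      exact ((tendsto_const_nhds.add ((hqlim l (mono (l - 1) l (by omega) (by omega))).const_mul B₁)).sub
        ((hqlim r (mono (l - 1) r (by omega) (by omega))).const_mul A₂)).sub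
        ((hqlim (r + 1) (mono (l - 1) (r + 1) (by omega) hrm)).const_mul B₂)
    have h2 : (A₁ + B₁ * 0 - A₂ * 0 - B₂ * 0) = A₁ := by ring
    rw [h2] at h1
    exact Tendsto.congr (fun θ => (hHE θ).symm) h1
  -- the N part
  have hNE : ∀ θ, Nstar θ / E θ = uₗ * (1 - q l θ)
      + (∑ i ∈ Finset.Icc (l + 1) r, v i * (q (i - 1) θ - q i θ))
      + z_r * (q r θ - q (r + 1) θ) := by
    intro θ
    have hform : Nstar θ = uₗ * (E θ - Real.exp (-(c l) / θ))
        + (∑ i ∈ Finset.Icc (l + 1) r,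
            v i * (Real.exp (-(c (i - 1)) / θ) - Real.exp (-(c i) / θ)))
        + z_r * (Real.exp (-(c r) / θ) - Real.exp (-(c (r + 1)) / θ)) := by
      rw [hN]
      congr 1
      · congr 1
        · rw [hPr, hp, hp, hEdef]; ring
        · exact Finset.sum_congr rfl fun i _ => by rw [hPr, hp, hp]; ring
      · rw [hPr, hp, hp]
        simp only [Nat.add_sub_cancel]
        ring
    rw [hform, hqdef]
    simp only
    rw [add_div, add_div, Finset.sum_div]
    congr 1
    congr 1
    · field_simp [hEne θ]
    · exact Finset.sum_congr rfl fun i _ => by rw [mul_div_assoc, sub_div]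
    · rw [mul_div_assoc, sub_div]
  have hNlim : Tendsto (fun θ => Nstar θ / E θ) (nhdsWithin 0 (Set.Ioi 0)) (nhds uₗ) := by
    have hsum : Tendsto (fun θ => ∑ i ∈ Finset.Icc (l + 1) r, v i * (q (i - 1) θ - q i θ))
        (nhdsWithin 0 (Set.Ioi 0)) (nhds 0) := by
      have h0 : Tendsto (fun θ => ∑ i ∈ Finset.Icc (l + 1) r, v i * (q (i - 1) θ - q i θ))
          (nhdsWithin 0 (Set.Ioi 0))
          (nhds (∑ i ∈ Finset.Icc (l + 1) r, (0 : ℝ))) := by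
        apply tendsto_finset_sum
        intro i hi
        rw [Finset.mem_Icc] at hi
        have hi1 : c (l - 1) < c (i - 1) := mono (l - 1) (i - 1) (by omega) (by omega)
        have hi2 : c (l - 1) < c i := mono (l - 1) i (by omega) (by omega)
        have := ((hqlim (i - 1) hi1).sub (hqlim i hi2)).const_mul (v i)
        simpa using this
      simpa using h0
    have h1 : Tendsto (fun θ => uₗ * (1 - q l θ)
        + (∑ i ∈ Finset.Icc (l + 1) r, v i * (q (i - 1) θ - q i θ))
        + z_r * (q r θ - q (r + 1) θ)) (nhdsWithin 0 (Set.Ioi 0))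
        (nhds (uₗ * (1 - 0) + 0 + z_r * (0 - 0))) := by
      exact (((tendsto_const_nhds.sub (hqlim l (mono (l - 1) l (by omega) (by omega)))).const_mul uₗ).add
        hsum).add (((hqlim r (mono (l - 1) r (by omega) (by omega))).sub
          (hqlim (r + 1) (mono (l - 1) (r + 1) (by omega) hrm))).const_mul z_r)
    have h2 : (uₗ * (1 - 0) + 0 + z_r * (0 - 0) : ℝ) = uₗ := by ring
    rw [h2] at h1
    exact Tendsto.congr (fun θ => (hNE θ).symm) h1
  -- combine
  have hgid : ∀ θ, g θ = (Nstar θ / E θ) / (Hstar θ / E θ) := by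
    intro θ
    rw [hg]
    rcases eq_or_ne (Hstar θ) 0 with h | h
    · simp [h]
    · field_simp [hEne θ]
  rw [show uₗ / A₁ = uₗ / A₁ from rfl]
  exact (tendsto_congr hgid).mpr (hNlim.div hHlim hA1pos.ne')
end

section
/- With the group boundaries, truncation points, indices, constants, exponential cdf, and function g_tT as in the context, the limit of g_tT(θ) as θ → ∞ equals [u_l (c_{l-1} - c_l) + Σ_{i=l+1}^{r} v_i (c_{i-1} - c_i) + z_r (c_r - c_{r+1})] / [A_1 c_{l-1} + B_1 c_l - A_2 c_r - B_2 c_{r+1}] (the denominator is nonzero since A_1 c_{l-1} + B_1 c_l ≤ c_l ≤ c_r < A_2 c_r + B_2 c_{r+1}). -/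
open MeasureTheory Filter

lemma aux_exp_lim (a : ℝ) :
    Tendsto (fun θ : ℝ => θ * (1 - Real.exp (-a / θ))) atTop (nhds a) := by
  rcases eq_or_ne a 0 with rfl | ha
  · have : (fun θ : ℝ => θ * (1 - Real.exp (-0 / θ))) = fun _ => (0 : ℝ) := by
      funext θ; simp
    rw [this]; exact tendsto_const_nhds
  · have hf : HasDerivAt (fun x : ℝ => 1 - Real.exp (-x)) 1 0 := by
      have h1 : HasDerivAt (fun x : ℝ => Real.exp (-x)) (-1) 0 := by
        simpa [Function.comp_def] using (Real.hasDerivAt_exp (-0)).comp 0 (hasDerivAt_neg 0)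
      simpa [Pi.sub_def] using (hasDerivAt_const (0 : ℝ) (1 : ℝ)).sub h1
    have hslope := hasDerivAt_iff_tendsto_slope.mp hf
    have h1 : Tendsto (fun x : ℝ => (1 - Real.exp (-x)) / x) (nhdsWithin 0 {(0:ℝ)}ᶜ) (nhds 1) := by
      refine hslope.congr' ?_
      filter_upwards [self_mem_nhdsWithin] with x hx
      simp [slope_def_field]
    have h2 : Tendsto (fun θ : ℝ => a / θ) atTop (nhdsWithin 0 {(0:ℝ)}ᶜ) := by
      rw [tendsto_nhdsWithin_iff]
      constructor
      · exact tendsto_const_nhds.div_atTop tendsto_id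
      · filter_upwards [eventually_gt_atTop 0] with θ hθ
        exact div_ne_zero ha hθ.ne'
    have h3 := (h1.comp h2).const_mul a
    rw [mul_one] at h3
    refine h3.congr' ?_
    filter_upwards [eventually_gt_atTop 0] with θ hθ
    have hθ0 : θ ≠ 0 := hθ.ne'
    simp only [Function.comp]
    rw [neg_div]
    field_simp

/-- Limiting value of `g_{tT}(θ)` as `θ → ∞`. -/
theorem stmt5
    (m : ℕ) (c : ℕ → ℝ) (hc0 : c 0 = 0)
    (hcmono : ∀ j, j < m → c j < c (j + 1))
    (l r : ℕ) (hl : 1 ≤ l) (hlr : l ≤ r) (hrm : r + 1 ≤ m)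
    (t T : ℝ) (ht1 : c (l - 1) < t) (ht2 : t ≤ c l) (hT1 : c r < T) (hT2 : T ≤ c (r + 1))
    (A₁ B₁ A₂ B₂ uₗ z_r : ℝ) (v : ℕ → ℝ)
    (hA₁ : A₁ = (c l - t) / (c l - c (l - 1)))
    (hB₁ : B₁ = (t - c (l - 1)) / (c l - c (l - 1)))
    (hA₂ : A₂ = (c (r + 1) - T) / (c (r + 1) - c r))
    (hB₂ : B₂ = (T - c r) / (c (r + 1) - c r))
    (huₗ : uₗ = (c l ^ 2 - t ^ 2) / (2 * (c l - c (l - 1))))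
    (hv : ∀ i, v i = (c i + c (i - 1)) / 2)
    (hz : z_r = (T ^ 2 - c r ^ 2) / (2 * (c (r + 1) - c r)))
    -- the exponential cdf at the group boundaries and the group probabilities
    (p : ℕ → ℝ → ℝ) (hp : ∀ j θ, p j θ = 1 - Real.exp (-(c j) / θ))
    (Pr : ℕ → ℝ → ℝ) (hPr : ∀ j θ, Pr j θ = p j θ - p (j - 1) θ)
    (Nstar Hstar g : ℝ → ℝ)
    (hN : ∀ θ, Nstar θ = uₗ * Pr l θ + (∑ i ∈ Finset.Icc (l + 1) r, v i * Pr i θ)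
      + z_r * Pr (r + 1) θ)
    (hH : ∀ θ, Hstar θ = A₂ * p r θ + B₂ * p (r + 1) θ - A₁ * p (l - 1) θ - B₁ * p l θ)
    (hg : ∀ θ, g θ = Nstar θ / Hstar θ)
    :
    Tendsto g atTop (nhds
      ((uₗ * (c (l - 1) - c l) + (∑ i ∈ Finset.Icc (l + 1) r, v i * (c (i - 1) - c i))
          + z_r * (c r - c (r + 1)))
        / (A₁ * c (l - 1) + B₁ * c l - A₂ * c r - B₂ * c (r + 1)))) := by
  -- monotonicity
  have hmono : ∀ i j : ℕ, i ≤ j → j ≤ m → c i ≤ c j := by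
    intro i j hij hjm
    induction j, hij using Nat.le_induction with
    | base => exact le_rfl
    | succ j hij ih => exact (ih (by omega)).trans (hcmono j (by omega)).le
  have hd1 : 0 < c l - c (l - 1) := by
    have h := hcmono (l - 1) (by omega)
    have hll : l - 1 + 1 = l := by omega
    rw [hll] at h; linarith
  have hd2 : 0 < c (r + 1) - c r := by
    have h := hcmono r (by omega); linarith
  have hABt : A₁ * c (l - 1) + B₁ * c l = t := by
    rw [hA₁, hB₁]; field_simp; ring
  have hABT : A₂ * c r + B₂ * c (r + 1) = T := by
    rw [hA₂, hB₂]; field_simp; ring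
  have hclcr : c l ≤ c r := hmono l r hlr (by omega)
  -- limits of θ * p j θ
  have hpj : ∀ j, Tendsto (fun θ => θ * p j θ) atTop (nhds (c j)) := by
    intro j
    simp only [hp]
    exact aux_exp_lim (c j)
  have hPrj : ∀ j, Tendsto (fun θ => θ * Pr j θ) atTop (nhds (c j - c (j - 1))) := by
    intro j
    refine ((hpj j).sub (hpj (j - 1))).congr fun θ => ?_
    rw [hPr]; ring
  -- numerator limit
  have hsum : Tendsto (fun θ => ∑ i ∈ Finset.Icc (l + 1) r, v i * (θ * Pr i θ)) atTop
      (nhds (∑ i ∈ Finset.Icc (l + 1) r, v i * (c i - c (i - 1)))) :=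
    tendsto_finset_sum _ fun i _ => (hPrj i).const_mul (v i)
  have hPr1 : Tendsto (fun θ => θ * Pr (r + 1) θ) atTop (nhds (c (r + 1) - c r)) := by
    have := hPrj (r + 1)
    simpa using this
  have hNlim : Tendsto (fun θ => θ * Nstar θ) atTop
      (nhds (uₗ * (c l - c (l - 1)) + (∑ i ∈ Finset.Icc (l + 1) r, v i * (c i - c (i - 1)))
        + z_r * (c (r + 1) - c r))) := by
    refine ((((hPrj l).const_mul uₗ).add hsum).add (hPr1.const_mul z_r)).congr fun θ => ?_
    rw [hN, mul_add, mul_add, Finset.mul_sum]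
    congr 1
    · congr 1
      · ring
      · exact Finset.sum_congr rfl fun i _ => by ring
    · ring
  have hHlim : Tendsto (fun θ => θ * Hstar θ) atTop
      (nhds (A₂ * c r + B₂ * c (r + 1) - A₁ * c (l - 1) - B₁ * c l)) := by
    have h' := (((hpj r).const_mul A₂).add ((hpj (r + 1)).const_mul B₂)).sub
      (((hpj (l - 1)).const_mul A₁).add ((hpj l).const_mul B₁))
    rw [show A₂ * c r + B₂ * c (r + 1) - (A₁ * c (l - 1) + B₁ * c l)
      = A₂ * c r + B₂ * c (r + 1) - A₁ * c (l - 1) - B₁ * c l by ring] at h'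
    refine h'.congr fun θ => ?_
    rw [hH]; ring
  have hLH : A₂ * c r + B₂ * c (r + 1) - A₁ * c (l - 1) - B₁ * c l ≠ 0 := by
    intro h; linarith
  have hdiv := hNlim.div hHlim hLH
  rw [show A₁ * c (l - 1) + B₁ * c l - A₂ * c r - B₂ * c (r + 1)
        = -(A₂ * c r + B₂ * c (r + 1) - A₁ * c (l - 1) - B₁ * c l) by ring]
  rw [show uₗ * (c (l - 1) - c l) + (∑ i ∈ Finset.Icc (l + 1) r, v i * (c (i - 1) - c i))
        + z_r * (c r - c (r + 1))
      = -(uₗ * (c l - c (l - 1)) + (∑ i ∈ Finset.Icc (l + 1) r, v i * (c i - c (i - 1)))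
        + z_r * (c (r + 1) - c r)) by
    rw [neg_add, neg_add, ← Finset.sum_neg_distrib]
    congr 1
    · congr 1
      · ring
      · exact Finset.sum_congr rfl fun i _ => by ring
    · ring]
  rw [neg_div_neg_eq]
  refine hdiv.congr' ?_
  filter_upwards [eventually_gt_atTop 0] with θ hθ
  rw [hg]; simp only [Pi.div_apply]; rw [mul_div_mul_left _ _ hθ.ne']
end

section
/- With the group boundaries, truncation points, indices, constants, exponential cdf, and function g_tT as in the context, assume additionally that t < c_l (so A_1 > 0), that H*(θ) ≠ 0 for every θ > 0, and that g_tT is strictly increasing on (0, ∞). Then for every real number μ̂ satisfying u_l/A_1 < μ̂ < [u_l (c_{l-1} - c_l) + Σ_{i=l+1}^{r} v_i (c_{i-1} - c_i) + z_r (c_r - c_{r+1})] / [A_1 c_{l-1} + B_1 c_l - A_2 c_r - B_2 c_{r+1}], the equation g_tT(θ) = μ̂ has exactly one solution θ in (0, ∞). -/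
open MeasureTheory Filter Topology

lemma auxE_tendsto_zero {a : ℝ} (ha : 0 < a) :
    Tendsto (fun θ : ℝ => Real.exp (-a / θ)) (nhdsWithin 0 (Set.Ioi 0)) (nhds 0) := by
  have h1 : Tendsto (fun θ : ℝ => -a / θ) (nhdsWithin 0 (Set.Ioi 0)) atBot := by
    have h2 : Tendsto (fun θ : ℝ => θ⁻¹) (nhdsWithin 0 (Set.Ioi 0)) atTop :=
      tendsto_inv_nhdsGT_zero
    have := h2.const_mul_atTop_of_neg (neg_neg_iff_pos.mpr ha)
    simpa [div_eq_mul_inv] using this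
  exact Real.tendsto_exp_atBot.comp h1

lemma auxE_slope (a b : ℝ) :
    Tendsto (fun θ : ℝ => θ * (Real.exp (-a / θ) - Real.exp (-b / θ))) atTop (nhds (b - a)) := by
  have hderiv : HasDerivAt (fun x : ℝ => Real.exp (-(a * x)) - Real.exp (-(b * x))) (b - a) 0 := by
    have h1 : HasDerivAt (fun x : ℝ => Real.exp (-(a * x))) (-a) 0 := by
      have := (((hasDerivAt_id (0:ℝ)).const_mul a).neg).exp
      simpa using this
    have h2 : HasDerivAt (fun x : ℝ => Real.exp (-(b * x))) (-b) 0 := by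
      have := (((hasDerivAt_id (0:ℝ)).const_mul b).neg).exp
      simpa using this
    have := h1.sub h2
    rw [show b - a = -a - -b by ring]
    exact this
  have hslope := hasDerivAt_iff_tendsto_slope.mp hderiv
  have hinv : Tendsto (fun θ : ℝ => θ⁻¹) atTop (nhdsWithin 0 {(0:ℝ)}ᶜ) := by
    rw [tendsto_nhdsWithin_iff]
    refine ⟨tendsto_inv_atTop_zero, ?_⟩
    filter_upwards [eventually_gt_atTop (0:ℝ)] with θ hθ
    exact (inv_ne_zero (ne_of_gt hθ))
  have := hslope.comp hinv
  apply this.congr'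
  filter_upwards [eventually_gt_atTop (0:ℝ)] with θ hθ
  simp only [Function.comp, slope_def_field]
  rw [show -(a * θ⁻¹) = -a / θ by ring, show -(b * θ⁻¹) = -b / θ by ring]
  rw [mul_zero, mul_zero, neg_zero, Real.exp_zero, sub_self, sub_zero, sub_zero]
  field_simp

/-- Unique solvability of the MTuM estimating equation `g_{tT}(θ) = μ̂`:
assuming `g_{tT}` is strictly increasing on `(0, ∞)` (the paper's Conjecture 1),
`H* ≠ 0` on `(0, ∞)`, and `t < c_l`, for every `μ̂` strictly between the two
limiting values of `g_{tT}` there is exactly one `θ ∈ (0, ∞)` with `g_{tT}(θ) = μ̂`. -/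
theorem stmt6
    (m : ℕ) (c : ℕ → ℝ) (hc0 : c 0 = 0)
    (hcmono : ∀ j, j < m → c j < c (j + 1))
    (l r : ℕ) (hl : 1 ≤ l) (hlr : l ≤ r) (hrm : r + 1 ≤ m)
    (t T : ℝ) (ht1 : c (l - 1) < t) (ht2 : t ≤ c l) (hT1 : c r < T) (hT2 : T ≤ c (r + 1))
    (A₁ B₁ A₂ B₂ uₗ z_r : ℝ) (v : ℕ → ℝ)
    (hA₁ : A₁ = (c l - t) / (c l - c (l - 1)))
    (hB₁ : B₁ = (t - c (l - 1)) / (c l - c (l - 1)))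
    (hA₂ : A₂ = (c (r + 1) - T) / (c (r + 1) - c r))
    (hB₂ : B₂ = (T - c r) / (c (r + 1) - c r))
    (huₗ : uₗ = (c l ^ 2 - t ^ 2) / (2 * (c l - c (l - 1))))
    (hv : ∀ i, v i = (c i + c (i - 1)) / 2)
    (hz : z_r = (T ^ 2 - c r ^ 2) / (2 * (c (r + 1) - c r)))
    -- the exponential cdf at the group boundaries and the group probabilities
    (p : ℕ → ℝ → ℝ) (hp : ∀ j θ, p j θ = 1 - Real.exp (-(c j) / θ))
    (Pr : ℕ → ℝ → ℝ) (hPr : ∀ j θ, Pr j θ = p j θ - p (j - 1) θ)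
    (Nstar Hstar g : ℝ → ℝ)
    (hN : ∀ θ, Nstar θ = uₗ * Pr l θ + (∑ i ∈ Finset.Icc (l + 1) r, v i * Pr i θ)
      + z_r * Pr (r + 1) θ)
    (hH : ∀ θ, Hstar θ = A₂ * p r θ + B₂ * p (r + 1) θ - A₁ * p (l - 1) θ - B₁ * p l θ)
    (hg : ∀ θ, g θ = Nstar θ / Hstar θ)
    (htl : t < c l)
    (hHne : ∀ θ : ℝ, 0 < θ → Hstar θ ≠ 0)
    (hmono : StrictMonoOn g (Set.Ioi (0 : ℝ))) :
    ∀ μHat : ℝ,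
      uₗ / A₁ < μHat →
      μHat < (uₗ * (c (l - 1) - c l) + (∑ i ∈ Finset.Icc (l + 1) r, v i * (c (i - 1) - c i))
          + z_r * (c r - c (r + 1)))
        / (A₁ * c (l - 1) + B₁ * c l - A₂ * c r - B₂ * c (r + 1)) →
      ∃! θ : ℝ, θ ∈ Set.Ioi (0 : ℝ) ∧ g θ = μHat := by
  intro μHat hμ1 hμ2
  -- monotonicity facts
  have hmc : ∀ k, k ≤ m → ∀ j, j ≤ k → c j ≤ c k := by
    intro k
    induction k with
    | zero => intro _ j hj; have : j = 0 := Nat.le_zero.mp hj; rw [this]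
    | succ n ih =>
      intro hk j hj
      rcases Nat.lt_succ_iff_lt_or_eq.mp (Nat.lt_succ_of_le hj) with h | h
      · exact le_trans (ih (by omega) j (by omega)) (le_of_lt (hcmono n (by omega)))
      · rw [h]
  have hsc : ∀ j k, j < k → k ≤ m → c j < c k := by
    intro j k hjk hkm
    exact lt_of_lt_of_le (hcmono j (by omega)) (hmc k hkm (j + 1) hjk)
  have hd1 : c (l - 1) < c l := by
    have h := hsc (l - 1) l (by omega) (by omega)
    exact h
  have hd2 : c r < c (r + 1) := lt_of_lt_of_le hT1 hT2
  have hd1' : c l - c (l - 1) ≠ 0 := ne_of_gt (sub_pos.mpr hd1)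
  have hd2' : c (r + 1) - c r ≠ 0 := ne_of_gt (sub_pos.mpr hd2)
  have hclr : c l ≤ c r := hmc r (by omega) l hlr
  have htT : t < T := lt_trans (lt_of_lt_of_le htl hclr) hT1
  have hA1pos : 0 < A₁ := by rw [hA₁]; exact div_pos (sub_pos.mpr htl) (sub_pos.mpr hd1)
  have hsum1 : A₁ + B₁ = 1 := by
    rw [hA₁, hB₁, ← add_div, div_eq_one_iff_eq hd1']; ring
  have hsum2 : A₂ + B₂ = 1 := by
    rw [hA₂, hB₂, ← add_div, div_eq_one_iff_eq hd2']; ring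
  -- rewriting Nstar, Hstar in terms of exponentials
  have hPr' : ∀ (j : ℕ) (θ : ℝ),
      Pr j θ = Real.exp (-c (j - 1) / θ) - Real.exp (-c j / θ) := by
    intro j θ; rw [hPr, hp, hp]; ring
  have hNstar : ∀ θ : ℝ, Nstar θ =
      uₗ * (Real.exp (-c (l - 1) / θ) - Real.exp (-c l / θ))
      + (∑ i ∈ Finset.Icc (l + 1) r,
          v i * (Real.exp (-c (i - 1) / θ) - Real.exp (-c i / θ)))
      + z_r * (Real.exp (-c r / θ) - Real.exp (-c (r + 1) / θ)) := by
    intro θ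
    rw [hN θ, hPr' l θ, hPr' (r + 1) θ,
      show (∑ i ∈ Finset.Icc (l + 1) r, v i * Pr i θ)
          = ∑ i ∈ Finset.Icc (l + 1) r,
              v i * (Real.exp (-c (i - 1) / θ) - Real.exp (-c i / θ)) from
        Finset.sum_congr rfl fun i _ => by rw [hPr' i θ]]
    simp only [Nat.add_sub_cancel]
  have hHstar : ∀ θ : ℝ, Hstar θ =
      A₁ * Real.exp (-c (l - 1) / θ) + B₁ * Real.exp (-c l / θ)
      - A₂ * Real.exp (-c r / θ) - B₂ * Real.exp (-c (r + 1) / θ) := by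
    intro θ
    rw [hH θ, hp, hp, hp, hp]
    linear_combination hsum2 - hsum1
  -- factorization key
  have key : ∀ a θ : ℝ,
      Real.exp (-a / θ) = Real.exp (-c (l - 1) / θ) * Real.exp (-(a - c (l - 1)) / θ) := by
    intro a θ; rw [← Real.exp_add]; congr 1; ring
  -- factored forms
  have hNfac : ∀ θ : ℝ, Nstar θ = Real.exp (-c (l - 1) / θ) *
      (uₗ * (1 - Real.exp (-(c l - c (l - 1)) / θ))
      + (∑ i ∈ Finset.Icc (l + 1) r,
          v i * (Real.exp (-(c (i - 1) - c (l - 1)) / θ)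
            - Real.exp (-(c i - c (l - 1)) / θ)))
      + z_r * (Real.exp (-(c r - c (l - 1)) / θ)
            - Real.exp (-(c (r + 1) - c (l - 1)) / θ))) := by
    intro θ
    rw [hNstar θ,
      show (∑ i ∈ Finset.Icc (l + 1) r,
            v i * (Real.exp (-c (i - 1) / θ) - Real.exp (-c i / θ)))
          = ∑ i ∈ Finset.Icc (l + 1) r, Real.exp (-c (l - 1) / θ) *
              (v i * (Real.exp (-(c (i - 1) - c (l - 1)) / θ)
                - Real.exp (-(c i - c (l - 1)) / θ))) from
        Finset.sum_congr rfl fun i _ => by rw [key (c (i - 1)) θ, key (c i) θ]; ring,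
      ← Finset.mul_sum, key (c l) θ, key (c r) θ, key (c (r + 1)) θ]
    ring
  have hHfac : ∀ θ : ℝ, Hstar θ = Real.exp (-c (l - 1) / θ) *
      (A₁ + B₁ * Real.exp (-(c l - c (l - 1)) / θ)
        - A₂ * Real.exp (-(c r - c (l - 1)) / θ)
        - B₂ * Real.exp (-(c (r + 1) - c (l - 1)) / θ)) := by
    intro θ
    rw [hHstar θ, key (c l) θ, key (c r) θ, key (c (r + 1)) θ]
    ring
  have hgfac : ∀ θ : ℝ, g θ =
      (uₗ * (1 - Real.exp (-(c l - c (l - 1)) / θ))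
      + (∑ i ∈ Finset.Icc (l + 1) r,
          v i * (Real.exp (-(c (i - 1) - c (l - 1)) / θ)
            - Real.exp (-(c i - c (l - 1)) / θ)))
      + z_r * (Real.exp (-(c r - c (l - 1)) / θ)
            - Real.exp (-(c (r + 1) - c (l - 1)) / θ)))
      / (A₁ + B₁ * Real.exp (-(c l - c (l - 1)) / θ)
        - A₂ * Real.exp (-(c r - c (l - 1)) / θ)
        - B₂ * Real.exp (-(c (r + 1) - c (l - 1)) / θ)) := by
    intro θ
    rw [hg θ, hNfac θ, hHfac θ, mul_div_mul_left _ _ (Real.exp_ne_zero _)]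
  -- limit at 0⁺
  have hlim0 : Tendsto g (nhdsWithin 0 (Set.Ioi 0)) (nhds (uₗ / A₁)) := by
    have h1 : Tendsto (fun θ : ℝ => Real.exp (-(c l - c (l - 1)) / θ))
        (nhdsWithin 0 (Set.Ioi 0)) (nhds 0) := auxE_tendsto_zero (sub_pos.mpr hd1)
    have h3 : Tendsto (fun θ : ℝ => Real.exp (-(c r - c (l - 1)) / θ))
        (nhdsWithin 0 (Set.Ioi 0)) (nhds 0) :=
      auxE_tendsto_zero (sub_pos.mpr (hsc (l - 1) r (by omega) (by omega)))
    have h4 : Tendsto (fun θ : ℝ => Real.exp (-(c (r + 1) - c (l - 1)) / θ))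
        (nhdsWithin 0 (Set.Ioi 0)) (nhds 0) :=
      auxE_tendsto_zero (sub_pos.mpr (hsc (l - 1) (r + 1) (by omega) (by omega)))
    have hsum : Tendsto (fun θ : ℝ => ∑ i ∈ Finset.Icc (l + 1) r,
        v i * (Real.exp (-(c (i - 1) - c (l - 1)) / θ)
          - Real.exp (-(c i - c (l - 1)) / θ)))
        (nhdsWithin 0 (Set.Ioi 0)) (nhds 0) := by
      rw [show (0 : ℝ) = ∑ i ∈ Finset.Icc (l + 1) r, (0 : ℝ) from
        Finset.sum_const_zero.symm]
      refine tendsto_finset_sum _ fun i hi => ?_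
      have hi' := Finset.mem_Icc.mp hi
      have e1 : Tendsto (fun θ : ℝ => Real.exp (-(c (i - 1) - c (l - 1)) / θ))
          (nhdsWithin 0 (Set.Ioi 0)) (nhds 0) :=
        auxE_tendsto_zero (sub_pos.mpr (hsc (l - 1) (i - 1) (by omega) (by omega)))
      have e2 : Tendsto (fun θ : ℝ => Real.exp (-(c i - c (l - 1)) / θ))
          (nhdsWithin 0 (Set.Ioi 0)) (nhds 0) :=
        auxE_tendsto_zero (sub_pos.mpr (hsc (l - 1) i (by omega) (by omega)))
      have := (e1.sub e2).const_mul (v i)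
      simpa using this
    have hNlim : Tendsto (fun θ : ℝ =>
        uₗ * (1 - Real.exp (-(c l - c (l - 1)) / θ))
        + (∑ i ∈ Finset.Icc (l + 1) r,
            v i * (Real.exp (-(c (i - 1) - c (l - 1)) / θ)
              - Real.exp (-(c i - c (l - 1)) / θ)))
        + z_r * (Real.exp (-(c r - c (l - 1)) / θ)
              - Real.exp (-(c (r + 1) - c (l - 1)) / θ)))
        (nhdsWithin 0 (Set.Ioi 0)) (nhds uₗ) := by
      have := ((((tendsto_const_nhds (x := (1:ℝ))).sub h1).const_mul uₗ).add hsum).add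
        ((h3.sub h4).const_mul z_r)
      simpa using this
    have hHlim : Tendsto (fun θ : ℝ =>
        A₁ + B₁ * Real.exp (-(c l - c (l - 1)) / θ)
        - A₂ * Real.exp (-(c r - c (l - 1)) / θ)
        - B₂ * Real.exp (-(c (r + 1) - c (l - 1)) / θ))
        (nhdsWithin 0 (Set.Ioi 0)) (nhds A₁) := by
      have := (((tendsto_const_nhds (x := A₁)).add (h1.const_mul B₁)).sub (h3.const_mul A₂)).sub
        (h4.const_mul B₂)
      simpa using this
    exact (hNlim.div hHlim (ne_of_gt hA1pos)).congr fun θ => (hgfac θ).symm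
  -- limit at +∞
  have hSH : Tendsto (fun θ : ℝ => θ * Hstar θ) atTop (nhds (T - t)) := by
    have k1 := auxE_slope (c (l - 1)) 0
    have k2 := auxE_slope (c l) 0
    have k3 := auxE_slope (c r) 0
    have k4 := auxE_slope (c (r + 1)) 0
    have comb := (((k1.const_mul A₁).add (k2.const_mul B₁)).sub (k3.const_mul A₂)).sub
      (k4.const_mul B₂)
    have hval : A₁ * (0 - c (l - 1)) + B₁ * (0 - c l) - A₂ * (0 - c r)
        - B₂ * (0 - c (r + 1)) = T - t := by
      rw [hA₁, hB₁, hA₂, hB₂]; field_simp; ring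
    rw [hval] at comb
    refine comb.congr fun θ => ?_
    rw [hHstar θ]
    simp only [neg_zero, zero_div, Real.exp_zero]
    linear_combination θ * hsum2 - θ * hsum1
  have hSN : Tendsto (fun θ : ℝ => θ * Nstar θ) atTop
      (nhds (uₗ * (c l - c (l - 1))
        + (∑ i ∈ Finset.Icc (l + 1) r, v i * (c i - c (i - 1)))
        + z_r * (c (r + 1) - c r))) := by
    have k1 := auxE_slope (c (l - 1)) (c l)
    have ksum : Tendsto (fun θ : ℝ => ∑ i ∈ Finset.Icc (l + 1) r,
        v i * (θ * (Real.exp (-c (i - 1) / θ) - Real.exp (-c i / θ)))) atTop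
        (nhds (∑ i ∈ Finset.Icc (l + 1) r, v i * (c i - c (i - 1)))) :=
      tendsto_finset_sum _ fun i _ => (auxE_slope (c (i - 1)) (c i)).const_mul (v i)
    have k3 := auxE_slope (c r) (c (r + 1))
    have comb := ((k1.const_mul uₗ).add ksum).add (k3.const_mul z_r)
    refine comb.congr fun θ => ?_
    rw [hNstar θ,
      show (∑ i ∈ Finset.Icc (l + 1) r,
            v i * (θ * (Real.exp (-c (i - 1) / θ) - Real.exp (-c i / θ))))
          = θ * ∑ i ∈ Finset.Icc (l + 1) r,
              v i * (Real.exp (-c (i - 1) / θ) - Real.exp (-c i / θ)) from by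
        rw [Finset.mul_sum]; exact Finset.sum_congr rfl fun i _ => by ring]
    ring
  have hlimInf : Tendsto g atTop (nhds ((uₗ * (c l - c (l - 1))
      + (∑ i ∈ Finset.Icc (l + 1) r, v i * (c i - c (i - 1)))
      + z_r * (c (r + 1) - c r)) / (T - t))) := by
    have := hSN.div hSH (ne_of_gt (sub_pos.mpr htT))
    apply this.congr'
    filter_upwards [eventually_gt_atTop (0 : ℝ)] with θ hθ
    rw [hg θ]
    exact mul_div_mul_left _ _ (ne_of_gt hθ)
  -- the upper bound equals the limit at infinity
  have hbound : (uₗ * (c (l - 1) - c l)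
      + (∑ i ∈ Finset.Icc (l + 1) r, v i * (c (i - 1) - c i))
      + z_r * (c r - c (r + 1)))
      / (A₁ * c (l - 1) + B₁ * c l - A₂ * c r - B₂ * c (r + 1))
      = (uₗ * (c l - c (l - 1))
      + (∑ i ∈ Finset.Icc (l + 1) r, v i * (c i - c (i - 1)))
      + z_r * (c (r + 1) - c r)) / (T - t) := by
    have hnum : uₗ * (c (l - 1) - c l)
        + (∑ i ∈ Finset.Icc (l + 1) r, v i * (c (i - 1) - c i))
        + z_r * (c r - c (r + 1))
        = -(uₗ * (c l - c (l - 1))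
        + (∑ i ∈ Finset.Icc (l + 1) r, v i * (c i - c (i - 1)))
        + z_r * (c (r + 1) - c r)) := by
      rw [show (∑ i ∈ Finset.Icc (l + 1) r, v i * (c (i - 1) - c i))
          = -∑ i ∈ Finset.Icc (l + 1) r, v i * (c i - c (i - 1)) from by
        rw [← Finset.sum_neg_distrib]
        exact Finset.sum_congr rfl fun i _ => by ring]
      ring
    have hden : A₁ * c (l - 1) + B₁ * c l - A₂ * c r - B₂ * c (r + 1) = -(T - t) := by
      rw [hA₁, hB₁, hA₂, hB₂]; field_simp; ring
    rw [hnum, hden, neg_div_neg_eq]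
  rw [hbound] at hμ2
  -- bracketing points
  obtain ⟨θ₁, hg1, hθ₁⟩ :=
    ((hlim0.eventually_lt_const hμ1).and eventually_mem_nhdsWithin).exists
  obtain ⟨θ₂, hg2, hθ₂⟩ :=
    ((hlimInf.eventually_const_lt hμ2).and (eventually_gt_atTop (0 : ℝ))).exists
  have hθ₁' : (0 : ℝ) < θ₁ := hθ₁
  have h12 : θ₁ < θ₂ := by
    rcases lt_trichotomy θ₁ θ₂ with h | h | h
    · exact h
    · exfalso; rw [h] at hg1; linarith
    · exfalso
      have := hmono (Set.mem_Ioi.mpr hθ₂) (Set.mem_Ioi.mpr hθ₁') h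
      linarith
  -- continuity of g on (0, ∞)
  have hexp : ∀ a : ℝ, ContinuousOn (fun θ : ℝ => Real.exp (-a / θ)) (Set.Ioi 0) := by
    intro a
    apply Real.continuous_exp.comp_continuousOn
    exact ContinuousOn.div continuousOn_const continuousOn_id fun θ hθ => ne_of_gt hθ
  have hNc : ContinuousOn Nstar (Set.Ioi 0) := by
    refine ContinuousOn.congr ?_ fun θ _ => hNstar θ
    exact ((continuousOn_const.mul ((hexp _).sub (hexp _))).add
      (continuousOn_finset_sum _ fun i _ =>
        continuousOn_const.mul ((hexp _).sub (hexp _)))).add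
      (continuousOn_const.mul ((hexp _).sub (hexp _)))
  have hHc : ContinuousOn Hstar (Set.Ioi 0) := by
    refine ContinuousOn.congr ?_ fun θ _ => hHstar θ
    exact (((continuousOn_const.mul (hexp _)).add (continuousOn_const.mul (hexp _))).sub
      (continuousOn_const.mul (hexp _))).sub (continuousOn_const.mul (hexp _))
  have hgc : ContinuousOn g (Set.Ioi (0 : ℝ)) :=
    ContinuousOn.congr (hNc.div hHc fun θ hθ => hHne θ hθ) fun θ _ => hg θ
  -- intermediate value theorem
  have hsub : Set.Icc θ₁ θ₂ ⊆ Set.Ioi (0 : ℝ) := fun x hx => lt_of_lt_of_le hθ₁' hx.1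
  obtain ⟨θ₀, hθ₀mem, hθ₀eq⟩ :=
    intermediate_value_Icc (le_of_lt h12) (hgc.mono hsub) ⟨le_of_lt hg1, le_of_lt hg2⟩
  have hθ₀pos : θ₀ ∈ Set.Ioi (0 : ℝ) := hsub hθ₀mem
  refine ⟨θ₀, ⟨hθ₀pos, hθ₀eq⟩, ?_⟩
  rintro θ' ⟨hθ'pos, hθ'eq⟩
  exact hmono.injOn hθ'pos hθ₀pos (by rw [hθ'eq, hθ₀eq])
end

section
/- With the group boundaries, truncation points, indices, constants, exponential cdf, N*, H*, and g_tT as in the context, define P(θ) = u_l (exp(-c_{l-1}/θ) - exp(-c_l/θ)) + Σ_{i=l+1}^{r} v_i (exp(-c_{i-1}/θ) - exp(-c_i/θ)) + z_r (exp(-c_r/θ) - exp(-c_{r+1}/θ)) and Q(θ) = B_2 (1 - exp(-c_{r+1}/θ)) - A_1 (1 - exp(-c_{l-1}/θ)) - B_1 (1 - exp(-c_l/θ)). Suppose T < c_{r+1} (so A_2 > 0), let θ > 0 and let μ̂ ≠ 0 be a real number with μ̂ · H*(θ) = N*(θ). Then exp(-c_r/θ) = (μ̂ A_2 - P(θ)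 + μ̂ Q(θ)) / (μ̂ A_2), this quantity lies strictly between 0 and 1, and consequently θ = -c_r / log((μ̂ A_2 - P(θ) + μ̂ Q(θ)) / (μ̂ A_2)). -/
open MeasureTheory

/-- The fixed-point representation of the MTuM equation: if `T < c_{r+1}` (so `A₂ > 0`),
`θ > 0`, `μ̂ ≠ 0` and `μ̂ H*(θ) = N*(θ)`, then
`exp(-c_r/θ) = (μ̂A₂ - P(θ) + μ̂Q(θ))/(μ̂A₂)`, this quantity lies strictly in `(0,1)`,
and `θ = -c_r / log((μ̂A₂ - P(θ) + μ̂Q(θ))/(μ̂A₂))`. -/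
theorem stmt8
    (m : ℕ) (c : ℕ → ℝ) (hc0 : c 0 = 0)
    (hcmono : ∀ j, j < m → c j < c (j + 1))
    (l r : ℕ) (hl : 1 ≤ l) (hlr : l ≤ r) (hrm : r + 1 ≤ m)
    (t T : ℝ) (ht1 : c (l - 1) < t) (ht2 : t ≤ c l) (hT1 : c r < T) (hT2 : T ≤ c (r + 1))
    (A₁ B₁ A₂ B₂ uₗ z_r : ℝ) (v : ℕ → ℝ)
    (hA₁ : A₁ = (c l - t) / (c l - c (l - 1)))
    (hB₁ : B₁ = (t - c (l - 1)) / (c l - c (l - 1)))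
    (hA₂ : A₂ = (c (r + 1) - T) / (c (r + 1) - c r))
    (hB₂ : B₂ = (T - c r) / (c (r + 1) - c r))
    (huₗ : uₗ = (c l ^ 2 - t ^ 2) / (2 * (c l - c (l - 1))))
    (hv : ∀ i, v i = (c i + c (i - 1)) / 2)
    (hz : z_r = (T ^ 2 - c r ^ 2) / (2 * (c (r + 1) - c r)))
    -- the exponential cdf at the group boundaries and the group probabilities
    (p : ℕ → ℝ → ℝ) (hp : ∀ j θ, p j θ = 1 - Real.exp (-(c j) / θ))
    (Pr : ℕ → ℝ → ℝ) (hPr : ∀ j θ, Pr j θ = p j θ - p (j - 1) θ)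
    (Nstar Hstar g : ℝ → ℝ)
    (hN : ∀ θ, Nstar θ = uₗ * Pr l θ + (∑ i ∈ Finset.Icc (l + 1) r, v i * Pr i θ)
      + z_r * Pr (r + 1) θ)
    (hH : ∀ θ, Hstar θ = A₂ * p r θ + B₂ * p (r + 1) θ - A₁ * p (l - 1) θ - B₁ * p l θ)
    (hg : ∀ θ, g θ = Nstar θ / Hstar θ)
    (Pfun Q : ℝ → ℝ)
    (hPfun : ∀ θ, Pfun θ
      = uₗ * (Real.exp (-(c (l - 1)) / θ) - Real.exp (-(c l) / θ))
        + (∑ i ∈ Finset.Icc (l + 1) r,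
            v i * (Real.exp (-(c (i - 1)) / θ) - Real.exp (-(c i) / θ)))
        + z_r * (Real.exp (-(c r) / θ) - Real.exp (-(c (r + 1)) / θ)))
    (hQ : ∀ θ, Q θ = B₂ * (1 - Real.exp (-(c (r + 1)) / θ))
      - A₁ * (1 - Real.exp (-(c (l - 1)) / θ)) - B₁ * (1 - Real.exp (-(c l) / θ)))
    (hTc : T < c (r + 1))
    (θ : ℝ) (hθ : 0 < θ)
    (μHat : ℝ) (hμ : μHat ≠ 0) (heq : μHat * Hstar θ = Nstar θ) :
    Real.exp (-(c r) / θ) = (μHat * A₂ - Pfun θ + μHat * Q θ) / (μHat * A₂)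
    ∧ 0 < (μHat * A₂ - Pfun θ + μHat * Q θ) / (μHat * A₂)
    ∧ (μHat * A₂ - Pfun θ + μHat * Q θ) / (μHat * A₂) < 1
    ∧ θ = -(c r) / Real.log ((μHat * A₂ - Pfun θ + μHat * Q θ) / (μHat * A₂)) := by

  have hrltm : r < m := by omega
  have hcr1 : c r < c (r + 1) := hcmono r hrltm
  have hmono : ∀ k, k ≤ m → ∀ j, j ≤ k → c j ≤ c k := by
    intro k
    induction k with
    | zero => intro _ j hj; simp [Nat.le_zero.mp hj]
    | succ n ih =>
      intro hn j hj
      rcases Nat.eq_or_lt_of_le hj with h | h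
      · simp [h]
      · exact le_trans (ih (by omega) j (by omega)) (le_of_lt (hcmono n (by omega)))
  have hcrpos : 0 < c r := by
    have h1 : c 0 < c 1 := hcmono 0 (by omega)
    have h2 : c 1 ≤ c r := hmono r (by omega) 1 (by omega)
    rw [hc0] at h1; linarith
  have hA2pos : 0 < A₂ := by
    rw [hA₂]; apply div_pos <;> linarith
  have hμA : μHat * A₂ ≠ 0 := mul_ne_zero hμ (ne_of_gt hA2pos)
  set E := Real.exp (-(c r) / θ) with hEdef
  have hNP : Nstar θ = Pfun θ := by
    rw [hN, hPfun]
    congr 1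
    congr 1
    · rw [hPr, hp, hp]; ring
    · exact Finset.sum_congr rfl (fun i _ => by rw [hPr, hp, hp]; ring)
    · rw [hPr, hp, hp]; simp only [Nat.add_sub_cancel]; ring
  have hHQ : Hstar θ = A₂ * (1 - E) + Q θ := by
    rw [hH, hQ, hp, hp, hp, hp, hEdef]; ring
  have key : μHat * (A₂ * (1 - E) + Q θ) = Pfun θ := by rw [← hHQ, ← hNP]; exact heq
  have h1 : E = (μHat * A₂ - Pfun θ + μHat * Q θ) / (μHat * A₂) := by
    rw [eq_div_iff hμA]; linear_combination -key
  have hEpos : 0 < E := Real.exp_pos _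
  have hElt1 : E < 1 := by
    rw [hEdef, Real.exp_lt_one_iff]
    exact div_neg_of_neg_of_pos (by linarith) hθ
  refine ⟨h1, h1 ▸ hEpos, h1 ▸ hElt1, ?_⟩
  rw [← h1, hEdef, Real.log_exp]
  rw [div_div_eq_mul_div, mul_comm, mul_div_assoc,
    div_self (neg_ne_zero.mpr (ne_of_gt hcrpos)), mul_one]
end
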